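/- For every x ∈ ℝ^d and every r > 0, the averaged regression function satisfies |η̄(x,r) − η(x)| ≤ r² · (‖x − m‖² + ‖x‖²). -/

import Mathlib

open MeasureTheory Real Metric

/-- Standard Gaussian density on `ℝ^d`. -/
noncomputable def stdGaussianDensity (d : ℕ) (x : EuclideanSpace ℝ (Fin d)) : ℝ :=
  (2 * π) ^ (-(d : ℝ) / 2) * Real.exp (-‖x‖ ^ 2 / 2)

/-- Regression function of the Gaussian translation model:
`η(x) = γ_d(x − m) / (γ_d(x) + γ_d(x − m))`. -/
noncomputable def gaussEta (d : ℕ) (m : EuclideanSpace ℝ (Fin d))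
    (x : EuclideanSpace ℝ (Fin d)) : ℝ :=
  stdGaussianDensity d (x - m) / (stdGaussianDensity d x + stdGaussianDensity d (x - m))

/-- Marginal (mixture) law of the design: density `(γ_d(x) + γ_d(x − m))/2`
with respect to Lebesgue measure. -/
noncomputable def gaussMixture (d : ℕ) (m : EuclideanSpace ℝ (Fin d)) :
    Measure (EuclideanSpace ℝ (Fin d)) :=
  volume.withDensity fun x =>
    ENNReal.ofReal ((stdGaussianDensity d x + stdGaussianDensity d (x - m)) / 2)

/-- `μ`-average of `η` over the Euclidean ball `B(x,r)`. -/
noncomputable def gaussEtaBar (d : ℕ) (m : EuclideanSpace ℝ (Fin d))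
    (x : EuclideanSpace ℝ (Fin d)) (r : ℝ) : ℝ :=
  ((gaussMixture d m (Metric.ball x r)).toReal)⁻¹ *
    ∫ y in Metric.ball x r, gaussEta d m y ∂(gaussMixture d m)

/-! ### Auxiliary hyperbolic inequalities -/

lemma aux_sinh_le_mul_cosh {s : ℝ} (hs : 0 ≤ s) : Real.sinh s ≤ s * Real.cosh s := by
  have key : MonotoneOn (fun t => t * Real.cosh t - Real.sinh t) (Set.Ici (0:ℝ)) := by
    apply monotoneOn_of_deriv_nonneg (convex_Ici 0)
    · exact ((continuous_id.mul Real.continuous_cosh).sub Real.continuous_sinh).continuousOn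
    · intro t ht
      exact (((hasDerivAt_id t).mul (Real.hasDerivAt_cosh t)).sub
        (Real.hasDerivAt_sinh t)).differentiableAt.differentiableWithinAt
    · intro t ht
      rw [interior_Ici] at ht
      have hd : HasDerivAt (fun t => t * Real.cosh t - Real.sinh t) (t * Real.sinh t) t := by
        have h := ((hasDerivAt_id t).mul (Real.hasDerivAt_cosh t)).sub (Real.hasDerivAt_sinh t)
        exact h.congr_deriv (by simp [id])
      rw [hd.deriv]
      have ht' : 0 ≤ t := le_of_lt ht
      exact mul_nonneg ht' (by rw [← Real.sinh_zero]; exact Real.sinh_le_sinh.mpr ht')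
  have h0 := key Set.self_mem_Ici (Set.mem_Ici.mpr hs) hs
  simp only [Real.cosh_zero, Real.sinh_zero, zero_mul, sub_zero, mul_zero, zero_sub, neg_zero] at h0
  linarith

lemma aux_cosh_sub_one_le (t : ℝ) : Real.cosh t - 1 ≤ t ^ 2 / 2 * Real.cosh t := by
  wlog ht : 0 ≤ t generalizing t
  · have h := this (-t) (by linarith [le_of_not_ge ht])
    simpa [Real.cosh_neg] using h
  have h1 : Real.sinh (t / 2) ≤ t / 2 * Real.cosh (t / 2) := aux_sinh_le_mul_cosh (by linarith)
  have h2 : Real.cosh t = 2 * Real.sinh (t / 2) ^ 2 + 1 := by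
    have h := Real.cosh_two_mul (t / 2)
    have h' : 2 * (t / 2) = t := by ring
    rw [h'] at h
    rw [h, Real.cosh_sq]; ring
  have h3 : Real.cosh t = 2 * Real.cosh (t / 2) ^ 2 - 1 := by
    have h := Real.cosh_two_mul (t / 2)
    have h' : 2 * (t / 2) = t := by ring
    rw [h'] at h
    rw [h, Real.sinh_sq]; ring
  have h4 : 0 ≤ Real.sinh (t / 2) := by rw [← Real.sinh_zero]; exact Real.sinh_le_sinh.mpr (by linarith)
  have h5 : Real.sinh (t / 2) ^ 2 ≤ (t / 2 * Real.cosh (t / 2)) ^ 2 := by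
    apply pow_le_pow_left₀ h4 h1
  nlinarith [Real.one_le_cosh (t / 2), sq_nonneg t]


/-! ### Gaussian lemmas -/

variable {d : ℕ}

lemma stdGaussian_pos (y : EuclideanSpace ℝ (Fin d)) : 0 < stdGaussianDensity d y := by
  unfold stdGaussianDensity; positivity

lemma continuous_stdGaussian_shift (v : EuclideanSpace ℝ (Fin d)) :
    Continuous (fun y => stdGaussianDensity d (y - v)) := by
  unfold stdGaussianDensity; fun_prop

lemma continuous_stdGaussian : Continuous (stdGaussianDensity d) := by
  unfold stdGaussianDensity; fun_prop

lemma integrableOn_ball_of_continuous {f : EuclideanSpace ℝ (Fin d) → ℝ} (hf : Continuous f)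
    (x : EuclideanSpace ℝ (Fin d)) (r : ℝ) : IntegrableOn f (ball x r) volume :=
  (hf.continuousOn.integrableOn_compact (isCompact_closedBall x r)).mono_set
    ball_subset_closedBall

lemma gauss_expand (v x y : EuclideanSpace ℝ (Fin d)) :
    stdGaussianDensity d (y - v)
      = stdGaussianDensity d (x - v)
        * (Real.exp (-(inner ℝ (x - v) (y - x) : ℝ)) * Real.exp (-‖y - x‖ ^ 2 / 2)) := by
  unfold stdGaussianDensity
  have hyv : y - v = (x - v) + (y - x) := by abel
  rw [hyv, norm_add_sq_real, mul_assoc]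
  congr 1
  rw [← Real.exp_add, ← Real.exp_add]
  congr 1
  ring

lemma reflect_ball_integral (f : EuclideanSpace ℝ (Fin d) → ℝ)
    (x : EuclideanSpace ℝ (Fin d)) (r : ℝ) :
    ∫ y in ball x r, f (x + x - y) = ∫ y in ball x r, f y := by
  rw [← integral_indicator measurableSet_ball, ← integral_indicator measurableSet_ball,
    ← integral_sub_left_eq_self (fun y => Set.indicator (ball x r) f y) volume (x + x)]
  congr 1
  ext y
  have hmem : x + x - y ∈ ball x r ↔ y ∈ ball x r := by
    have h : x + x - y - x = -(y - x) := by abel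
    simp only [mem_ball, dist_eq_norm, h, norm_neg]
  by_cases hy : y ∈ ball x r <;> simp [Set.indicator_apply, hmem, hy]

/-- The symmetrized integrand. -/
noncomputable def refG (v x y : EuclideanSpace ℝ (Fin d)) : ℝ :=
  stdGaussianDensity d (x - v) * Real.cosh ((inner ℝ (x - v) (y - x) : ℝ))
    * Real.exp (-‖y - x‖ ^ 2 / 2)

lemma continuous_refG (v x : EuclideanSpace ℝ (Fin d)) : Continuous (refG v x) := by
  apply Continuous.mul
  · exact continuous_const.mul (Real.continuous_cosh.comp
      (continuous_const.inner (continuous_id.sub continuous_const)))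
  · apply Real.continuous_exp.comp
    fun_prop

lemma refG_pos (v x y : EuclideanSpace ℝ (Fin d)) : 0 < refG v x y := by
  have h1 := stdGaussian_pos (d := d) (x - v)
  have h2 := Real.cosh_pos ((inner ℝ (x - v) (y - x) : ℝ))
  have h3 := Real.exp_pos (-(‖y - x‖ ^ 2) / 2)
  unfold refG; positivity

lemma gauss_ball_integral (v x : EuclideanSpace ℝ (Fin d)) (r : ℝ) :
    ∫ y in ball x r, stdGaussianDensity d (y - v) = ∫ y in ball x r, refG v x y := by
  have hrefl : ∫ y in ball x r, stdGaussianDensity d (x + x - y - v)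
      = ∫ y in ball x r, stdGaussianDensity d (y - v) :=
    reflect_ball_integral (fun y => stdGaussianDensity d (y - v)) x r
  have hint1 : IntegrableOn (fun y => stdGaussianDensity d (y - v)) (ball x r) volume :=
    integrableOn_ball_of_continuous (continuous_stdGaussian_shift v) x r
  have hint2 : IntegrableOn (fun y => stdGaussianDensity d (x + x - y - v)) (ball x r) volume := by
    apply integrableOn_ball_of_continuous _ x r
    exact (continuous_stdGaussian_shift (d := d) v).comp
      (continuous_const.sub continuous_id :
        Continuous fun y : EuclideanSpace ℝ (Fin d) => x + x - y)
  have key : ∀ y : EuclideanSpace ℝ (Fin d),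
      stdGaussianDensity d (y - v) + stdGaussianDensity d (x + x - y - v)
        = 2 * refG v x y := by
    intro y
    have e1 := gauss_expand v x y
    have e2 := gauss_expand v x (x + x - y)
    have h3 : x + x - y - x = -(y - x) := by abel
    rw [h3] at e2
    rw [e1, e2]
    unfold refG
    rw [Real.cosh_eq, inner_neg_right, norm_neg, neg_neg]
    ring
  have hsum : ∫ y in ball x r,
      (stdGaussianDensity d (y - v) + stdGaussianDensity d (x + x - y - v))
        = 2 * ∫ y in ball x r, stdGaussianDensity d (y - v) := by
    rw [integral_add hint1 hint2, hrefl]; ring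
  have hsum2 : ∫ y in ball x r,
      (stdGaussianDensity d (y - v) + stdGaussianDensity d (x + x - y - v))
        = 2 * ∫ y in ball x r, refG v x y := by
    rw [← integral_const_mul]
    exact setIntegral_congr_fun measurableSet_ball fun y _ => key y
  linarith [hsum, hsum2]

/-! ### Computation of the mixture measure and integral -/

lemma continuous_mixdens (m : EuclideanSpace ℝ (Fin d)) :
    Continuous (fun y =>
      (stdGaussianDensity d y + stdGaussianDensity d (y - m)) / 2) :=
  ((continuous_stdGaussian.add (continuous_stdGaussian_shift m)).div_const 2)

lemma gaussMixture_ball_toReal (m x : EuclideanSpace ℝ (Fin d)) (r : ℝ) :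
    (gaussMixture d m (ball x r)).toReal
      = ∫ y in ball x r, (stdGaussianDensity d y + stdGaussianDensity d (y - m)) / 2 := by
  have hnn : ∀ y : EuclideanSpace ℝ (Fin d),
      0 ≤ (stdGaussianDensity d y + stdGaussianDensity d (y - m)) / 2 := fun y => by
    have := stdGaussian_pos (d := d) y
    have := stdGaussian_pos (d := d) (y - m)
    positivity
  have hint : IntegrableOn
      (fun y => (stdGaussianDensity d y + stdGaussianDensity d (y - m)) / 2)
      (ball x r) volume := integrableOn_ball_of_continuous (continuous_mixdens m) x r
  rw [gaussMixture, withDensity_apply _ measurableSet_ball,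
    ← ofReal_integral_eq_lintegral_ofReal hint (Filter.Eventually.of_forall fun y => hnn y),
    ENNReal.toReal_ofReal (integral_nonneg fun y => hnn y)]

lemma gaussMixture_setIntegral_eta (m x : EuclideanSpace ℝ (Fin d)) (r : ℝ) :
    ∫ y in ball x r, gaussEta d m y ∂(gaussMixture d m)
      = ∫ y in ball x r, stdGaussianDensity d (y - m) / 2 := by
  have hmeas : Measurable (fun y : EuclideanSpace ℝ (Fin d) =>
      ((stdGaussianDensity d y + stdGaussianDensity d (y - m)) / 2).toNNReal) :=
    (continuous_mixdens m).measurable.real_toNNReal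
  have hrw : gaussMixture d m = volume.withDensity (fun y =>
      (((stdGaussianDensity d y + stdGaussianDensity d (y - m)) / 2).toNNReal : ENNReal)) := rfl
  rw [hrw, setIntegral_withDensity_eq_setIntegral_smul hmeas _ measurableSet_ball]
  apply setIntegral_congr_fun measurableSet_ball
  intro y _
  have ha := stdGaussian_pos (d := d) (y - m)
  have hb := stdGaussian_pos (d := d) y
  have hnn : (0:ℝ) ≤ (stdGaussianDensity d y + stdGaussianDensity d (y - m)) / 2 := by positivity
  simp only [NNReal.smul_def, Real.coe_toNNReal _ hnn, smul_eq_mul, gaussEta]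
  field_simp

/-! ### The core pointwise estimate -/

lemma core_est {a b w tA tB S r : ℝ} (ha : 0 < a) (hb : 0 < b) (hw : 0 < w)
    (hS : 0 ≤ S) (hA : tA ^ 2 ≤ r ^ 2 * S) (hB : tB ^ 2 ≤ r ^ 2 * S) :
    |b * (a * Real.cosh tA * w) - a * (b * Real.cosh tB * w)|
      ≤ r ^ 2 * S / 2 * (b + a) * (b * Real.cosh tB * w + a * Real.cosh tA * w) := by
  have hrS : 0 ≤ r ^ 2 * S := le_trans (sq_nonneg tA) hA
  set cA := Real.cosh tA with hcA
  set cB := Real.cosh tB with hcB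
  have hcA1 : 1 ≤ cA := Real.one_le_cosh tA
  have hcB1 : 1 ≤ cB := Real.one_le_cosh tB
  have hcoshA : cA - 1 ≤ r ^ 2 * S / 2 * cA := by
    have h := aux_cosh_sub_one_le tA
    nlinarith
  have hcoshB : cB - 1 ≤ r ^ 2 * S / 2 * cB := by
    have h := aux_cosh_sub_one_le tB
    nlinarith
  clear_value cA cB
  have habs : |b * (a * cA * w) - a * (b * cB * w)| = a * b * w * |cA - cB| := by
    rw [show b * (a * cA * w) - a * (b * cB * w) = a * b * w * (cA - cB) by ring,
      abs_mul, abs_of_pos (by positivity)]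
  rw [habs]
  have h1 : |cA - cB| ≤ (cA - 1) + (cB - 1) := by
    rw [abs_sub_le_iff]; constructor <;> linarith
  have h2 : a * b * w * |cA - cB| ≤ a * b * w * (r ^ 2 * S / 2 * (cA + cB)) := by
    apply mul_le_mul_of_nonneg_left _ (by positivity)
    calc |cA - cB| ≤ (cA - 1) + (cB - 1) := h1
      _ ≤ r ^ 2 * S / 2 * cA + r ^ 2 * S / 2 * cB := by linarith
      _ = r ^ 2 * S / 2 * (cA + cB) := by ring
  refine h2.trans ?_
  have h3 : a * b * (cA + cB) ≤ (b + a) * (b * cB + a * cA) := by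
    nlinarith [mul_nonneg (mul_nonneg hb.le hb.le) (le_trans zero_le_one hcB1),
      mul_nonneg (mul_nonneg ha.le ha.le) (le_trans zero_le_one hcA1)]
  calc a * b * w * (r ^ 2 * S / 2 * (cA + cB))
      = r ^ 2 * S / 2 * w * (a * b * (cA + cB)) := by ring
    _ ≤ r ^ 2 * S / 2 * w * ((b + a) * (b * cB + a * cA)) := by
        apply mul_le_mul_of_nonneg_left h3 (by positivity)
    _ = r ^ 2 * S / 2 * (b + a) * (b * cB * w + a * cA * w) := by ring

lemma inner_sq_le {m x : EuclideanSpace ℝ (Fin d)} {r : ℝ}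
    (v : EuclideanSpace ℝ (Fin d)) (y : EuclideanSpace ℝ (Fin d)) (hy : y ∈ ball x r)
    (hv : ‖x - v‖ ^ 2 ≤ ‖x - m‖ ^ 2 + ‖x - 0‖ ^ 2) :
    ((inner ℝ (x - v) (y - x) : ℝ)) ^ 2 ≤ r ^ 2 * (‖x - m‖ ^ 2 + ‖x - 0‖ ^ 2) := by
  have hur : ‖y - x‖ < r := by rwa [mem_ball, dist_eq_norm] at hy
  have h := abs_real_inner_le_norm (x - v) (y - x)
  have h2 : |(inner ℝ (x - v) (y - x) : ℝ)| ≤ ‖x - v‖ * r := by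
    refine h.trans ?_
    exact mul_le_mul_of_nonneg_left hur.le (norm_nonneg (x - v))
  have h3 : ((inner ℝ (x - v) (y - x) : ℝ)) ^ 2 ≤ (‖x - v‖ * r) ^ 2 := by
    rw [← sq_abs]
    exact pow_le_pow_left₀ (abs_nonneg _) h2 2
  nlinarith [norm_nonneg (x - v), sq_nonneg r]

lemma core_pointwise {m x : EuclideanSpace ℝ (Fin d)} {r : ℝ}
    (y : EuclideanSpace ℝ (Fin d)) (hy : y ∈ ball x r) :
    |stdGaussianDensity d (x - 0) * refG m x y - stdGaussianDensity d (x - m) * refG 0 x y|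
      ≤ r ^ 2 * (‖x - m‖ ^ 2 + ‖x - 0‖ ^ 2) / 2
        * (stdGaussianDensity d (x - 0) + stdGaussianDensity d (x - m))
        * (refG 0 x y + refG m x y) := by
  have hA := inner_sq_le (m := m) m y hy (by nlinarith [sq_nonneg ‖x - 0‖])
  have hB := inner_sq_le (m := m) 0 y hy (by nlinarith [sq_nonneg ‖x - m‖])
  exact core_est (stdGaussian_pos (x - m)) (stdGaussian_pos (x - 0))
    (Real.exp_pos _) (by positivity) hA hB

/-! ### Main theorem -/

/-- Inequality (tec1) in the proof of Proposition 4.1: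
`|η̄(x,r) − η(x)| ≤ r²·(‖x − m‖² + ‖x‖²)`. -/
theorem etaBar_sub_eta_le (d : ℕ) (hd : 1 ≤ d)
    (m : EuclideanSpace ℝ (Fin d)) (hm : m ≠ 0)
    (x : EuclideanSpace ℝ (Fin d)) (r : ℝ) (hr : 0 < r) :
    |gaussEtaBar d m x r - gaussEta d m x| ≤ r ^ 2 * (‖x - m‖ ^ 2 + ‖x‖ ^ 2) := by
  set B := ball x r with hB
  -- integrals of the two Gaussian densities over the ball
  set A := ∫ y in B, stdGaussianDensity d (y - m) with hAdef
  set Bi := ∫ y in B, stdGaussianDensity d y with hBidef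
  set a := stdGaussianDensity d (x - m) with hadef
  set b := stdGaussianDensity d x with hbdef
  have hapos : 0 < a := stdGaussian_pos _
  have hbpos : 0 < b := stdGaussian_pos _
  -- integrability facts
  have i_gm : IntegrableOn (fun y => stdGaussianDensity d (y - m)) B volume :=
    integrableOn_ball_of_continuous (continuous_stdGaussian_shift m) x r
  have i_g : IntegrableOn (stdGaussianDensity d) B volume :=
    integrableOn_ball_of_continuous continuous_stdGaussian x r
  have i_r0 : IntegrableOn (refG 0 x) B volume :=
    integrableOn_ball_of_continuous (continuous_refG 0 x) x r
  have i_rm : IntegrableOn (refG m x) B volume :=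
    integrableOn_ball_of_continuous (continuous_refG m x) x r
  -- reflection representations
  have hA_refG : A = ∫ y in B, refG m x y := gauss_ball_integral m x r
  have hBi_refG : Bi = ∫ y in B, refG 0 x y := by
    have h := gauss_ball_integral (0 : EuclideanSpace ℝ (Fin d)) x r
    simpa [sub_zero] using h
  -- positivity of the denominator
  have hDpos : 0 < Bi + A := by
    have hsum : Bi + A = ∫ y in B, (stdGaussianDensity d y + stdGaussianDensity d (y - m)) :=
      (integral_add i_g i_gm).symm
    rw [hsum]
    have hnn : 0 ≤ᵐ[volume.restrict B]
        fun y => stdGaussianDensity d y + stdGaussianDensity d (y - m) :=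
      Filter.Eventually.of_forall fun y =>
        (add_pos (stdGaussian_pos y) (stdGaussian_pos (y - m))).le
    rw [setIntegral_pos_iff_support_of_nonneg_ae hnn (i_g.add i_gm)]
    have hsupp : (Function.support fun y =>
        stdGaussianDensity d y + stdGaussianDensity d (y - m)) = Set.univ := by
      ext y
      simp [Function.support, (add_pos (stdGaussian_pos y) (stdGaussian_pos (y - m))).ne']
    rw [hsupp, Set.univ_inter]
    exact measure_ball_pos volume x hr
  -- the value of the averaged regression function
  have hmixR : (gaussMixture d m B).toReal = (Bi + A) / 2 := by
    rw [gaussMixture_ball_toReal m x r]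
    rw [show (fun y => (stdGaussianDensity d y + stdGaussianDensity d (y - m)) / 2)
        = (fun y => (stdGaussianDensity d y + stdGaussianDensity d (y - m)) * (2:ℝ)⁻¹) by
      funext y; ring]
    rw [integral_mul_const, integral_add i_g i_gm]
    ring
  have hetaInt : ∫ y in B, gaussEta d m y ∂(gaussMixture d m) = A / 2 := by
    rw [gaussMixture_setIntegral_eta m x r]
    rw [show (fun y => stdGaussianDensity d (y - m) / 2)
        = (fun y => stdGaussianDensity d (y - m) * (2:ℝ)⁻¹) by funext y; ring]
    rw [integral_mul_const]
    ring
  have hbar : gaussEtaBar d m x r = A / (Bi + A) := by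
    unfold gaussEtaBar
    rw [← hB, hmixR, hetaInt]
    field_simp
  -- the numerator
  set N := b * A - a * Bi with hNdef
  have heta : gaussEta d m x = a / (b + a) := rfl
  have hdiff : gaussEtaBar d m x r - gaussEta d m x = N / ((Bi + A) * (b + a)) := by
    rw [hbar, heta, hNdef]
    field_simp
    ring
  -- bound on the numerator
  set S := ‖x - m‖ ^ 2 + ‖x‖ ^ 2 with hSdef
  have hSnn : 0 ≤ S := by positivity
  have hNbound : |N| ≤ r ^ 2 * S / 2 * (b + a) * (Bi + A) := by
    have hNint : N = ∫ y in B, (b * refG m x y - a * refG 0 x y) := by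
      rw [integral_sub (i_rm.const_mul b) (i_r0.const_mul a),
        integral_const_mul, integral_const_mul, ← hA_refG, ← hBi_refG]
    have hb0 : b = stdGaussianDensity d (x - 0) := by rw [sub_zero]
    have hS0 : S = ‖x - m‖ ^ 2 + ‖x - 0‖ ^ 2 := by rw [sub_zero]
    have habs : |N| ≤ ∫ y in B, |b * refG m x y - a * refG 0 x y| := by
      rw [hNint]
      simpa [Real.norm_eq_abs] using
        norm_integral_le_integral_norm (μ := volume.restrict B)
          (fun y => b * refG m x y - a * refG 0 x y)
    have hmono : ∫ y in B, |b * refG m x y - a * refG 0 x y|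
        ≤ ∫ y in B, r ^ 2 * S / 2 * (b + a) * (refG 0 x y + refG m x y) := by
      apply setIntegral_mono_on
      · exact ((i_rm.const_mul b).sub (i_r0.const_mul a)).abs
      · exact ((i_r0.add i_rm).const_mul _)
      · exact measurableSet_ball
      · intro y hy
        have h := core_pointwise (m := m) (x := x) (r := r) y hy
        rw [← hb0, ← hS0] at h
        exact h
    have hG : ∫ y in B, r ^ 2 * S / 2 * (b + a) * (refG 0 x y + refG m x y)
        = r ^ 2 * S / 2 * (b + a) * (Bi + A) := by
      rw [integral_const_mul, integral_add i_r0 i_rm, ← hA_refG, ← hBi_refG]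
    linarith [habs, hmono, hG.le, hG.ge]
  -- conclude
  have hspos : 0 < b + a := by linarith
  rw [hdiff, abs_div, abs_of_pos (mul_pos hDpos hspos)]
  rw [div_le_iff₀ (mul_pos hDpos hspos)]
  have hP : 0 ≤ r ^ 2 * S * ((Bi + A) * (b + a)) :=
    mul_nonneg (mul_nonneg (sq_nonneg r) hSnn) (mul_nonneg hDpos.le hspos.le)
  calc |N| ≤ r ^ 2 * S / 2 * (b + a) * (Bi + A) := hNbound
    _ = (r ^ 2 * S * ((Bi + A) * (b + a))) / 2 := by ring
    _ ≤ r ^ 2 * S * ((Bi + A) * (b + a)) := half_le_self hP
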